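/- The centralizer of a free generator a in a free group is exactly the cyclic subgroup generated by a. -/

import Mathlib

namespace FreeGroupCentralizerAux

open FreeGroup List

variable {S : Type*} [DecidableEq S]

/-- The non-cancellation relation between adjacent letters. -/
def R : (S × Bool) → (S × Bool) → Prop := fun p q => ¬(p.1 = q.1 ∧ p.2 = !q.2)

theorem reduce_eq_self_iff_chain' (L : List (S × Bool)) :
    FreeGroup.reduce L = L ↔ List.Chain' R L := by
  induction L with
  | nil => exact ⟨fun _ => List.IsChain.nil, fun _ => by simp⟩
  | cons p L ih =>
    constructor
    · intro h
      have hred : FreeGroup.reduce L = L := by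
        rw [FreeGroup.reduce.cons] at h
        rcases hM : FreeGroup.reduce L with _ | ⟨hd, tl⟩
        · rw [hM] at h
          simp only at h
          have hL : L = [] := by
            cases L with
            | nil => rfl
            | cons q u => simp at h
          rw [hL] at hM ⊢
        · rw [hM] at h
          simp only at h
          split_ifs at h with hc
          · exfalso
            have hle : (FreeGroup.reduce L).length ≤ L.length :=
              FreeGroup.Red.length_le (FreeGroup.reduce.red)
            rw [hM] at hle
            have := congrArg List.length h
            simp only [List.length_cons] at this hle
            omega
          · injection h with h1 h2
      have hchain : List.Chain' R L := ih.mp hred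
      cases L with
      | nil => exact List.IsChain.singleton _
      | cons q t =>
        rw [FreeGroup.reduce.cons, hred] at h
        simp only at h
        split_ifs at h with hc
        · exfalso
          have := congrArg List.length h
          simp only [List.length_cons] at this
          omega
        · exact List.isChain_cons_cons.mpr ⟨hc, hchain⟩
    · intro h
      have hred : FreeGroup.reduce L = L := ih.mpr (List.isChain_cons.mp h).2
      rw [FreeGroup.reduce.cons, hred]
      cases L with
      | nil => rfl
      | cons q t =>
        simp only
        have hr : R p q := (List.isChain_cons_cons.mp h).1
        rw [if_neg hr]

theorem key (a : S) : ∀ (n : ℕ) (w : List (S × Bool)), w.length ≤ n →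
    FreeGroup.reduce w = w →
    FreeGroup.mk w * FreeGroup.of a = FreeGroup.of a * FreeGroup.mk w →
    ∃ m : ℤ, FreeGroup.mk w = (FreeGroup.of a) ^ m := by
  intro n
  induction n with
  | zero =>
    intro w hlen _ _
    have : w = [] := List.eq_nil_of_length_eq_zero (Nat.le_zero.mp hlen)
    exact ⟨0, by rw [this]; rfl⟩
  | succ n ih =>
    intro w hlen hred hcomm
    rcases w with _ | ⟨⟨b, tb⟩, t⟩
    · exact ⟨0, rfl⟩
    by_cases hb : b = a
    · subst hb
      -- now the generator is called `b`
      have htred : FreeGroup.reduce t = t :=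
        (reduce_eq_self_iff_chain' t).mpr (List.isChain_cons.mp ((reduce_eq_self_iff_chain' _).mp hred)).2
      have htlen : t.length ≤ n := by
        simp only [List.length_cons] at hlen; omega
      cases tb
      · -- first letter (b, false) : mk w = (of b)⁻¹ * mk t
        have hw : FreeGroup.mk ((b, false) :: t) = (FreeGroup.of b)⁻¹ * FreeGroup.mk t := by
          have h1 : (FreeGroup.of b)⁻¹ = FreeGroup.mk [(b, false)] := by
            rw [show FreeGroup.of b = FreeGroup.mk [(b, true)] from rfl, FreeGroup.inv_mk]
            rfl
          rw [h1, FreeGroup.mul_mk]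
          rfl
        rw [hw] at hcomm
        have h2 : (FreeGroup.of b)⁻¹ * FreeGroup.mk t * FreeGroup.of b = FreeGroup.mk t := by
          rw [hcomm, mul_inv_cancel_left]
        have hcomm' := congrArg (fun z => FreeGroup.of b * z) h2
        simp only [← mul_assoc, mul_inv_cancel, one_mul] at hcomm'
        obtain ⟨m, hm⟩ := ih t htlen htred hcomm'
        refine ⟨m - 1, ?_⟩
        rw [hw, hm, zpow_sub_one]
        exact (((Commute.refl (FreeGroup.of b)).zpow_right m).inv_left.eq)
      · -- first letter (b, true) : mk w = of b * mk t
        have hw : FreeGroup.mk ((b, true) :: t) = FreeGroup.of b * FreeGroup.mk t := by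
          rw [show FreeGroup.of b = FreeGroup.mk [(b, true)] from rfl, FreeGroup.mul_mk]
          rfl
        rw [hw] at hcomm
        have hcomm' : FreeGroup.mk t * FreeGroup.of b = FreeGroup.of b * FreeGroup.mk t :=
          mul_left_cancel (by rw [← mul_assoc]; exact hcomm)
        obtain ⟨m, hm⟩ := ih t htlen htred hcomm'
        refine ⟨m + 1, ?_⟩
        rw [hw, hm, zpow_add_one]
        exact (((Commute.refl (FreeGroup.of b)).zpow_left m).eq).symm
    · -- first letter is not a^{±1}; derive a contradiction
      exfalso
      set w := (b, tb) :: t with hwdef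
      have hchain : List.Chain' R w := (reduce_eq_self_iff_chain' w).mp hred
      -- reduce ((a, true) :: w) = (a, true) :: w
      have hright : FreeGroup.reduce ((a, true) :: w) = (a, true) :: w := by
        apply (reduce_eq_self_iff_chain' _).mpr
        refine List.isChain_cons_cons.mpr ⟨?_, hchain⟩
        intro hcon
        exact hb hcon.1.symm
      -- hcomm as words
      have hw_eq : FreeGroup.mk (w ++ [(a, true)]) = FreeGroup.mk ((a, true) :: w) := by
        calc FreeGroup.mk (w ++ [(a, true)])
            = FreeGroup.mk w * FreeGroup.mk [(a, true)] := FreeGroup.mul_mk.symm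
          _ = FreeGroup.mk w * FreeGroup.of a := rfl
          _ = FreeGroup.of a * FreeGroup.mk w := hcomm
          _ = FreeGroup.mk [(a, true)] * FreeGroup.mk w := rfl
          _ = FreeGroup.mk ([(a, true)] ++ w) := FreeGroup.mul_mk
          _ = FreeGroup.mk ((a, true) :: w) := rfl
      have hred_eq := FreeGroup.reduce.sound hw_eq
      rw [hright] at hred_eq
      rcases List.eq_nil_or_concat w with hnil | ⟨w', ⟨c, tc⟩, hw'⟩
      · simp [hwdef] at hnil
      rw [List.concat_eq_append] at hw'
      by_cases hc : c = a ∧ tc = false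
      · -- last letter is (a, false): cancellation shortens the word, contradiction
        rw [hc.1, hc.2] at hw'
        have hstep : FreeGroup.Red.Step (w ++ [(a, true)]) w' := by
          rw [hw', List.append_assoc]
          have hs : FreeGroup.Red.Step (w' ++ (a, false) :: (a, !false) :: []) (w' ++ []) :=
            FreeGroup.Red.Step.not
          simpa using hs
        have heq2 : FreeGroup.reduce (w ++ [(a, true)]) = FreeGroup.reduce w' :=
          FreeGroup.reduce.Step.eq hstep
        rw [heq2] at hred_eq
        have hle : (FreeGroup.reduce w').length ≤ w'.length :=
          FreeGroup.Red.length_le (FreeGroup.reduce.red)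
        have hlen1 := congrArg List.length hred_eq
        have hlw : w.length = w'.length + 1 := by rw [hw']; simp
        simp only [List.length_cons] at hlen1
        omega
      · -- last letter is not (a, false): w ++ [(a,true)] is reduced
        have hleft : FreeGroup.reduce (w ++ [(a, true)]) = w ++ [(a, true)] := by
          apply (reduce_eq_self_iff_chain' _).mpr
          apply List.isChain_append.mpr
          refine ⟨hchain, List.isChain_singleton _, ?_⟩
          intro x hx y hy
          rw [hw', List.getLast?_append_cons] at hx
          simp only [List.getLast?_singleton, Option.mem_some_iff] at hx
          simp only [List.head?_cons, Option.mem_some_iff] at hy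
          subst hx; subst hy
          intro hcon
          simp only [Bool.not_true] at hcon
          exact hc ⟨hcon.1, hcon.2⟩
        rw [hleft] at hred_eq
        -- compare heads: (b, tb) = (a, true) contradicting b ≠ a
        have hhead : ((b, tb) : S × Bool) = (a, true) := by
          have h4 := congrArg List.head? hred_eq
          rw [hwdef] at h4
          simp only [List.cons_append, List.head?_cons] at h4
          exact Option.some_injective _ h4
        exact hb (congrArg Prod.fst hhead)

end FreeGroupCentralizerAux

theorem free_group_centralizer_of_generator {S : Type*} (a : S) (x : FreeGroup S) :
    x * FreeGroup.of a = FreeGroup.of a * x ↔ ∃ n : ℤ, x = (FreeGroup.of a) ^ n := by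
  constructor
  · intro h
    classical
    have hx : x = FreeGroup.mk x.toWord := FreeGroup.mk_toWord.symm
    rw [hx] at h ⊢
    exact FreeGroupCentralizerAux.key a x.toWord.length x.toWord le_rfl
      (FreeGroup.reduce_toWord x) h
  · rintro ⟨n, rfl⟩
    exact ((Commute.refl (FreeGroup.of a)).zpow_left n).eq
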